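/- Let G be a 3-colorable good graph with a fixed vertex v0 and associated partition V(G) = T_G ∪ M_G ∪ B_G. Let G1 = G ∪ {e} for some non-edge e of G, let x and y be vertices with x, y ∈ B_{G1}, and let G2 = G1 ∪ {v0 y}, where G1 and G2 are 3-colorable. If B_{G2} is an independent set in G2 (property (P1) holds for G2), then x ∉ T_{G2}. -/

import Mathlib

open SimpleGraph

/-- The graph obtained from `G` by adding the edge `e`. -/
def addEdge {V : Type*} (G : SimpleGraph V) (e : Sym2 V) : SimpleGraph V :=
  G ⊔ SimpleGraph.fromEdgeSet {e}

/-- Top vertices: the vertices receiving the same color as `v0` in every proper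
3-coloring of `G`. -/
def topSet {V : Type*} (G : SimpleGraph V) (v0 : V) : Set V :=
  {x | ∀ c : G.Coloring (Fin 3), c x = c v0}

/-- Middle vertices: the vertices outside the top having a neighbor in the top. -/
def midSet {V : Type*} (G : SimpleGraph V) (v0 : V) : Set V :=
  {x | x ∉ topSet G v0 ∧ ∃ t ∈ topSet G v0, G.Adj x t}

/-- Bottom vertices: all remaining vertices. -/
def bottomVtxSet {V : Type*} (G : SimpleGraph V) (v0 : V) : Set V :=
  {x | x ∉ topSet G v0 ∧ x ∉ midSet G v0}

/-- The vertex set of `Γ_G(u)`, the connected component of `u` in the subgraph of `G`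
induced on `{u} ∪ M_G`: all vertices reachable from `u` by a walk staying inside
`{u} ∪ M_G`. -/
def gammaSet {V : Type*} (G : SimpleGraph V) (v0 u : V) : Set V :=
  {w | ∃ p : G.Walk u w, ∀ z ∈ p.support, z ∈ insert u (midSet G v0)}

/-- `m` and `m'` lie in the same middle-component of `G` (a connected component of the
subgraph induced on `M_G`): they are joined by a walk staying inside `M_G`. -/
def midReach {V : Type*} (G : SimpleGraph V) (v0 : V) (m m' : V) : Prop :=
  ∃ p : G.Walk m m', ∀ z ∈ p.support, z ∈ midSet G v0

/-- Property (P1): the bottom `B_G` is an independent set in `G`. -/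
def prop1 {V : Type*} (G : SimpleGraph V) (v0 : V) : Prop :=
  ∀ u ∈ bottomVtxSet G v0, ∀ v ∈ bottomVtxSet G v0, ¬ G.Adj u v

/-- Property (P2): every middle-component of `G` has at most one attached bottom
vertex. -/
def prop2 {V : Type*} (G : SimpleGraph V) (v0 : V) : Prop :=
  ∀ u v m m' : V, u ∈ bottomVtxSet G v0 → v ∈ bottomVtxSet G v0 →
    m ∈ midSet G v0 → m' ∈ midSet G v0 →
    G.Adj u m → G.Adj v m' → midReach G v0 m m' → u = v

/-- `G` is good: it satisfies properties (P1) and (P2). -/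
def goodGraph {V : Type*} (G : SimpleGraph V) (v0 : V) : Prop :=
  prop1 G v0 ∧ prop2 G v0

/-- The bad pairs `BAD_G`: the pairs `uv` such that there exist distinct bottom vertices
`x ≠ y` with `u ∈ V(Γ_G(x))` and `v ∈ V(Γ_G(y))`. -/
def badPair {V : Type*} (G : SimpleGraph V) (v0 : V) (e : Sym2 V) : Prop :=
  ∃ u v x y : V, e = s(u, v) ∧ x ∈ bottomVtxSet G v0 ∧ y ∈ bottomVtxSet G v0 ∧ x ≠ y ∧
    u ∈ gammaSet G v0 x ∧ v ∈ gammaSet G v0 y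

/-- `G` is almost good: `G` is good, or some edge can be removed from `G` so that the
resulting graph is good. -/
def almostGood {V : Type*} (G : SimpleGraph V) (v0 : V) : Prop :=
  goodGraph G v0 ∨ ∃ e ∈ G.edgeSet, goodGraph (G.deleteEdges {e}) v0

section Aux

variable {V : Type*} {G H : SimpleGraph V} {v0 : V}

lemma mem_topSet_self : v0 ∈ topSet G v0 := fun _ => rfl

lemma mid_color_ne {m : V} (hm : m ∈ midSet G v0) (c : G.Coloring (Fin 3)) :
    c m ≠ c v0 := by
  obtain ⟨_, t, htT, hadj⟩ := hm
  have h := c.valid hadj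
  have ht := htT c
  rw [ht] at h
  exact h

lemma bot_adj_mid (hP1 : prop1 G v0) {u w : V} (hu : u ∈ bottomVtxSet G v0)
    (h : G.Adj u w) : w ∈ midSet G v0 := by
  by_cases hwt : w ∈ topSet G v0
  · exact absurd (⟨hu.1, w, hwt, h⟩ : u ∈ midSet G v0) hu.2
  by_cases hwm : w ∈ midSet G v0
  · exact hwm
  · exact absurd h (hP1 u hu w ⟨hwt, hwm⟩)

lemma midReach_left {m m' : V} (h : midReach G v0 m m') : m ∈ midSet G v0 := by
  obtain ⟨p, hp⟩ := h; exact hp m p.start_mem_support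

lemma midReach_right {m m' : V} (h : midReach G v0 m m') : m' ∈ midSet G v0 := by
  obtain ⟨p, hp⟩ := h; exact hp m' p.end_mem_support

lemma midReach_symm {m m' : V} (h : midReach G v0 m m') : midReach G v0 m' m := by
  obtain ⟨p, hp⟩ := h
  exact ⟨p.reverse, fun z hz => hp z (by rwa [Walk.support_reverse, List.mem_reverse] at hz)⟩

lemma midReach_trans {m m' m'' : V} (h : midReach G v0 m m')
    (h' : midReach G v0 m' m'') : midReach G v0 m m'' := by
  obtain ⟨p, hp⟩ := h
  obtain ⟨q, hq⟩ := h'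
  refine ⟨p.append q, fun z hz => ?_⟩
  rw [Walk.support_append] at hz
  rcases List.mem_append.mp hz with h1 | h1
  · exact hp z h1
  · exact hq z (List.mem_of_mem_tail h1)

lemma midReach_refl {m : V} (hm : m ∈ midSet G v0) : midReach G v0 m m := by
  refine ⟨Walk.nil, fun z hz => ?_⟩
  simp only [Walk.support_nil, List.mem_singleton] at hz
  subst hz; exact hm

lemma midReach_adj {m m' : V} (hm : m ∈ midSet G v0) (hm' : m' ∈ midSet G v0)
    (h : G.Adj m m') : midReach G v0 m m' := by
  refine ⟨Walk.cons h Walk.nil, fun z hz => ?_⟩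
  simp only [Walk.support_cons, Walk.support_nil, List.mem_cons, List.mem_singleton,
    List.not_mem_nil, or_false] at hz
  rcases hz with rfl | rfl
  · exact hm
  · exact hm'

lemma walk_parity (c d : G.Coloring (Fin 3)) {m m' : V} (p : G.Walk m m')
    (hp : ∀ z ∈ p.support, z ∈ midSet G v0) :
    (c m = c m') ↔ (d m = d m') := by
  induction p with
  | nil => simp
  | @cons w w₁ w₂ h q ih =>
    have hw : w ∈ midSet G v0 := hp w (Walk.start_mem_support _)
    have hq : ∀ z ∈ q.support, z ∈ midSet G v0 := fun z hz =>
      hp z (by rw [Walk.support_cons]; exact List.mem_cons_of_mem _ hz)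
    have hw₁ : w₁ ∈ midSet G v0 := hq w₁ q.start_mem_support
    have hw₂ : w₂ ∈ midSet G v0 := hq w₂ q.end_mem_support
    have f3 : ∀ z α β γ : Fin 3, α ≠ z → β ≠ z → γ ≠ z → α ≠ β → (α = γ ↔ ¬ (β = γ)) := by
      decide
    have keyc := f3 (c v0) _ _ _ (mid_color_ne hw c) (mid_color_ne hw₁ c)
      (mid_color_ne hw₂ c) (c.valid h)
    have keyd := f3 (d v0) _ _ _ (mid_color_ne hw d) (mid_color_ne hw₁ d)
      (mid_color_ne hw₂ d) (d.valid h)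
    rw [keyc, keyd, ih hq]

lemma mono_nbrs {u m m' : V} (hu : u ∈ bottomVtxSet G v0) (c : G.Coloring (Fin 3))
    (hm : G.Adj u m) (hm' : G.Adj u m') (hr : midReach G v0 m m') :
    c m = c m' := by
  by_contra hne
  obtain ⟨p, hp⟩ := hr
  refine hu.1 (fun d => ?_)
  have hdm : ¬ (d m = d m') := fun hh => hne ((walk_parity c d p hp).mpr hh)
  have f3 : ∀ z α β γ : Fin 3, γ ≠ α → γ ≠ β → ¬(α = β) → α ≠ z → β ≠ z → γ = z := by decide
  exact f3 (d v0) (d m) (d m') (d u) (d.valid hm) (d.valid hm') hdm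
    (mid_color_ne (hp m p.start_mem_support) d) (mid_color_ne (hp m' p.end_mem_support) d)

def restrictColoring (hle : G ≤ H) (c : H.Coloring (Fin 3)) : G.Coloring (Fin 3) :=
  Coloring.mk c (fun hadj => c.valid (hle hadj))

lemma topSet_mono (hle : G ≤ H) {w : V} (hw : w ∈ topSet G v0) :
    w ∈ topSet H v0 := fun c => hw (restrictColoring hle c)

lemma botSet_anti (hle : G ≤ H) {w : V} (hw : w ∈ bottomVtxSet H v0) :
    w ∈ bottomVtxSet G v0 := by
  constructor
  · exact fun hwT => hw.1 (topSet_mono hle hwT)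
  · rintro ⟨hwt, t, htT, hadj⟩
    exact hw.2 ⟨hw.1, t, topSet_mono hle htT, hle hadj⟩

end Aux

section Recolor

variable {V : Type*} {G : SimpleGraph V} {v0 : V}

private lemma fin3_other_ne : ∀ z t : Fin 3, t ≠ z → (0 - z - t) ≠ z ∧ (0 - z - t) ≠ t := by
  decide

private lemma fin3_swap_ne_self : ∀ z t k : Fin 3, t ≠ z → k ≠ z →
    (if k = t then 0 - z - t else if k = 0 - z - t then t else k) ≠ k := by decide

private lemma fin3_swap_ne_z : ∀ z t k : Fin 3, t ≠ z → k ≠ z →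
    (if k = t then 0 - z - t else if k = 0 - z - t then t else k) ≠ z := by decide

private lemma fin3_swap_inj : ∀ z t a b : Fin 3,
    (if a = t then 0 - z - t else if a = 0 - z - t then t else a) =
    (if b = t then 0 - z - t else if b = 0 - z - t then t else b) → a = b := by decide

private lemma fin3_exists_two : ∀ z : Fin 3, ∃ p q : Fin 3, p ≠ z ∧ q ≠ z ∧ p ≠ q := by decide

lemma recolor (hgood : goodGraph G v0) {u : V} (hu : u ∈ bottomVtxSet G v0)
    (c : G.Coloring (Fin 3)) (t : Fin 3) (ht : t ≠ c v0) :
    ∃ c' : G.Coloring (Fin 3), c' u = t ∧ c' v0 = c v0 ∧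
      (∀ w, w ≠ u → ¬ (∃ m, G.Adj u m ∧ midReach G v0 w m ∧ c m = t) → c' w = c w) ∧
      (∀ w, (∃ m, G.Adj u m ∧ midReach G v0 w m ∧ c m = t) → c' w ≠ c w) := by
  classical
  set σ : Fin 3 → Fin 3 :=
    fun k => if k = t then 0 - c v0 - t else if k = 0 - c v0 - t then t else k with hσ
  set Sw : V → Prop := fun w => ∃ m, G.Adj u m ∧ midReach G v0 w m ∧ c m = t with hSw
  set f : V → Fin 3 := fun w => if w = u then t else if Sw w then σ (c w) else c w with hf
  have hSwMid : ∀ w, Sw w → w ∈ midSet G v0 := by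
    rintro w ⟨m, -, hr, -⟩
    exact midReach_left hr
  have hSw_ne_u : ∀ w, Sw w → w ≠ u := fun w hw hwu =>
    hu.2 (hwu ▸ hSwMid w hw)
  have hnbrM : ∀ w, G.Adj u w → w ∈ midSet G v0 := fun w h => bot_adj_mid hgood.1 hu h
  have fu : f u = t := if_pos rfl
  have fSw : ∀ w, Sw w → f w = σ (c w) := by
    intro w hw
    rw [hf]; simp only [if_neg (hSw_ne_u w hw), if_pos hw]
  have fnot : ∀ w, w ≠ u → ¬ Sw w → f w = c w := by
    intro w hwu hwn
    rw [hf]; simp only [if_neg hwu, if_neg hwn]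
  have hedge_u : ∀ w, G.Adj u w → f w ≠ t := by
    intro w hw
    by_cases hsw : Sw w
    · obtain ⟨m, hm, hr, hcm⟩ := hsw
      have hcw : c w = t := (mono_nbrs hu c hw hm hr).trans hcm
      rw [fSw w ⟨m, hm, hr, hcm⟩, ← hcw]
      exact fin3_swap_ne_self (c v0) t (c w) ht (mid_color_ne (hnbrM w hw) c)
    · rw [fnot w (Adj.ne' hw) hsw]
      intro hcw
      exact hsw ⟨w, hw, midReach_refl (hnbrM w hw), hcw⟩
  have hMain : ∀ w w', G.Adj w w' → w' ≠ u → Sw w → ¬ Sw w' → f w ≠ f w' := by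
    intro w w' h hw'u hsw hsw'
    obtain ⟨m, hm, hr, hcm⟩ := id hsw
    by_cases hw'm : w' ∈ midSet G v0
    · exact absurd ⟨m, hm, midReach_trans (midReach_adj hw'm (hSwMid w hsw) h.symm) hr, hcm⟩ hsw'
    by_cases hw't : w' ∈ topSet G v0
    · have hcw' : f w' = c v0 := by rw [fnot w' hw'u hsw']; exact hw't c
      rw [hcw', fSw w hsw]
      exact fin3_swap_ne_z (c v0) t (c w) ht (mid_color_ne (hSwMid w hsw) c)
    · exact fun _ => hw'u (hgood.2 u w' m w hu ⟨hw't, hw'm⟩ (hnbrM m hm) (hSwMid w hsw)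
        hm h.symm (midReach_symm hr)).symm
  have valid : ∀ {w w'}, G.Adj w w' → f w ≠ f w' := by
    intro w w' h
    by_cases hwu : w = u
    · subst hwu
      rw [fu]
      exact (hedge_u w' h).symm
    by_cases hw'u : w' = u
    · subst hw'u
      rw [fu]
      exact hedge_u w h.symm
    by_cases hsw : Sw w <;> by_cases hsw' : Sw w'
    · rw [fSw w hsw, fSw w' hsw']
      intro heq
      exact c.valid h (fin3_swap_inj (c v0) t (c w) (c w') heq)
    · exact hMain w w' h hw'u hsw hsw'
    · exact (hMain w' w h.symm hwu hsw' hsw).symm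
    · rw [fnot w hwu hsw, fnot w' hw'u hsw']
      exact c.valid h
  refine ⟨Coloring.mk f valid, fu, ?_, ?_, ?_⟩
  · have hv0u : v0 ≠ u := fun hh => hu.1 (hh ▸ (mem_topSet_self (G := G)))
    have hv0sw : ¬ Sw v0 := fun hh => (hSwMid v0 hh).1 mem_topSet_self
    exact fnot v0 hv0u hv0sw
  · exact fun w hwu hwn => fnot w hwu hwn
  · intro w hw
    have hwM : w ∈ midSet G v0 := hSwMid w hw
    show f w ≠ c w
    rw [fSw w hw]
    exact fin3_swap_ne_self (c v0) t (c w) ht (mid_color_ne hwM c)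

end Recolor

section Big

variable {V : Type*} {G : SimpleGraph V} {v0 : V}

lemma big_step (hgood : goodGraph G v0) {u v a b : V} (hu : u ∈ bottomVtxSet G v0)
    (hv : v ∈ bottomVtxSet G v0) (huv : u ≠ v) (c : G.Coloring (Fin 3))
    (hcab : c a ≠ c b) (hcv : c v ≠ c v0)
    (hstar : ∀ d : G.Coloring (Fin 3), d a ≠ d b → d u ≠ d v0 → d v = d v0) :
    a = u ∨ ∃ m, G.Adj u m ∧ midReach G v0 a m := by
  classical
  by_contra hA
  push_neg at hA
  obtain ⟨hau, hAm⟩ := hA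
  have key : ∀ t : Fin 3, t ≠ c v0 → ∃ c' : G.Coloring (Fin 3),
      c' u = t ∧ c' v0 = c v0 ∧
      (∀ w, w ≠ u → ¬ (∃ m, G.Adj u m ∧ midReach G v0 w m ∧ c m = t) → c' w = c w) ∧
      (∀ w, (∃ m, G.Adj u m ∧ midReach G v0 w m ∧ c m = t) → c' w ≠ c w) ∧
      c' a = c' b := by
    intro t ht
    obtain ⟨c', h1, h2, h3, h4⟩ := recolor hgood hu c t ht
    refine ⟨c', h1, h2, h3, h4, ?_⟩
    by_contra hne
    have hvne : ¬ (∃ m, G.Adj u m ∧ midReach G v0 v m ∧ c m = t) := by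
      rintro ⟨m, -, hr, -⟩
      exact hv.2 (midReach_left hr)
    have hv' : c' v = c v := h3 v (Ne.symm huv) hvne
    have hmain := hstar c' hne (by rw [h1, h2]; exact ht)
    rw [hv', h2] at hmain
    exact hcv hmain
  have hano : ∀ t : Fin 3, ¬ (∃ m, G.Adj u m ∧ midReach G v0 a m ∧ c m = t) := by
    rintro t ⟨m, h1, h2, -⟩
    exact hAm m h1 h2
  by_cases hbu : b = u
  · obtain ⟨p, q, hp, hq, hpq⟩ := fin3_exists_two (c v0)
    obtain ⟨c1, hu1, -, h31, -, heq1⟩ := key p hp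
    obtain ⟨c2, hu2, -, h32, -, heq2⟩ := key q hq
    have e1 : c a = p := by rw [← h31 a hau (hano p), heq1, hbu, hu1]
    have e2 : c a = q := by rw [← h32 a hau (hano q), heq2, hbu, hu2]
    exact hpq (e1 ▸ e2)
  by_cases hbm : ∃ m, G.Adj u m ∧ midReach G v0 b m
  · obtain ⟨m₀, hm₀, hr₀⟩ := hbm
    have ht₀ : c m₀ ≠ c v0 := mid_color_ne (midReach_right hr₀) c
    obtain ⟨ht₁z, ht₁t⟩ := fin3_other_ne (c v0) (c m₀) ht₀
    obtain ⟨c', hu', hv0', h3, h4, heq⟩ := key (0 - c v0 - c m₀) ht₁z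
    have hb : c' b = c b := by
      refine h3 b hbu ?_
      rintro ⟨m, hm, hr, hcm⟩
      have := mono_nbrs hu c hm₀ hm (midReach_trans (midReach_symm hr₀) hr)
      rw [hcm] at this
      exact ht₁t this.symm
    have ha' : c' a = c a := h3 a hau (hano _)
    exact hcab (by rw [← ha', heq, hb])
  · push_neg at hbm
    obtain ⟨p, q, hp, -, -⟩ := fin3_exists_two (c v0)
    obtain ⟨c1, -, -, h31, -, heq1⟩ := key p hp
    have hb : c1 b = c b := by
      refine h31 b hbu ?_
      rintro ⟨m, h1, h2, -⟩
      exact hbm m h1 h2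
    have ha' : c1 a = c a := h31 a hau (hano p)
    exact hcab (by rw [← ha', heq1, hb])

end Big

/-- If `G` is a good 3-colorable graph, `G1 = G ∪ {e}` for a non-edge `e` of `G`,
`x, y ∈ B_{G1}`, `G2 = G1 ∪ {v0 y}`, `G1` and `G2` are 3-colorable, and `G2` satisfies
property (P1) (its bottom is independent), then `x ∉ T_{G2}`. -/
theorem statement_17 {V : Type*} (G : SimpleGraph V) (v0 : V)
    (hcol : G.Colorable 3) (hgood : goodGraph G v0)
    (e : Sym2 V) (hd : ¬ e.IsDiag) (hne : e ∉ G.edgeSet)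
    (hcol1 : (addEdge G e).Colorable 3)
    (x y : V) (hx : x ∈ bottomVtxSet (addEdge G e) v0) (hy : y ∈ bottomVtxSet (addEdge G e) v0)
    (hcol2 : (addEdge (addEdge G e) s(v0, y)).Colorable 3)
    (hP1 : prop1 (addEdge (addEdge G e) s(v0, y)) v0) :
    x ∉ topSet (addEdge (addEdge G e) s(v0, y)) v0 := by
  classical
  by_cases hxy : x = y
  · subst hxy
    intro hT
    have hxv0 : x ≠ v0 := fun h => hx.1 (h ▸ (mem_topSet_self (G := addEdge G e)))
    have hadj : (addEdge (addEdge G e) s(v0, x)).Adj v0 x :=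
      Or.inr ((fromEdgeSet_adj _).mpr ⟨rfl, fun h => hxv0 h.symm⟩)
    obtain ⟨c2⟩ := hcol2
    exact c2.valid hadj (hT c2).symm
  · revert hd hne hcol1 hx hy hcol2 hP1
    induction e using Sym2.ind with
    | _ a b =>
    intro hd hne hcol1 hx hy hcol2 hP1 hT
    have hab : a ≠ b := fun h => hd (Sym2.mk_isDiag_iff.mpr h)
    have hle1 : G ≤ addEdge G s(a, b) := le_sup_left
    have hxB : x ∈ bottomVtxSet G v0 := botSet_anti hle1 hx
    have hyB : y ∈ bottomVtxSet G v0 := botSet_anti hle1 hy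
    have hG1ab : (addEdge G s(a, b)).Adj a b :=
      Or.inr ((fromEdgeSet_adj _).mpr ⟨rfl, hab⟩)
    -- lifting a G-coloring compatible with both new edges to G2
    have lift : ∀ d : G.Coloring (Fin 3), d a ≠ d b → d y ≠ d v0 → d x = d v0 := by
      intro d hab' hyv
      have valid : ∀ {w w'}, (addEdge (addEdge G s(a, b)) s(v0, y)).Adj w w' →
          d w ≠ d w' := by
        intro w w' h
        simp only [addEdge, sup_adj, fromEdgeSet_adj, Set.mem_singleton_iff] at h
        rcases h with (hG | ⟨hs, hne'⟩) | ⟨hs, hne'⟩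
        · exact d.valid hG
        · rcases Sym2.eq_iff.mp hs with ⟨rfl, rfl⟩ | ⟨rfl, rfl⟩
          · exact hab'
          · exact hab'.symm
        · rcases Sym2.eq_iff.mp hs with ⟨rfl, rfl⟩ | ⟨rfl, rfl⟩
          · exact fun hh => hyv hh.symm
          · exact hyv
      exact hT (Coloring.mk d (fun hh => valid hh))
    have star_x : ∀ d : G.Coloring (Fin 3), d a ≠ d b → d x ≠ d v0 → d y = d v0 := by
      intro d h1 h2
      by_contra h3
      exact h2 (lift d h1 h3)
    -- a coloring of G1 where y avoids v0's color
    obtain ⟨κ, hκ⟩ : ∃ κ : (addEdge G s(a, b)).Coloring (Fin 3), ¬ κ y = κ v0 :=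
      not_forall.mp hy.1
    obtain ⟨κ', hκ'⟩ : ∃ κ' : (addEdge G s(a, b)).Coloring (Fin 3), ¬ κ' x = κ' v0 :=
      not_forall.mp hx.1
    have HxS := big_step hgood hxB hyB hxy (restrictColoring hle1 κ)
      (κ.valid hG1ab) hκ star_x
    have HyS := big_step hgood hyB hxB (Ne.symm hxy) (restrictColoring hle1 κ')
      (κ'.valid hG1ab) hκ' lift
    rcases HxS with rfl | ⟨m1, hm1, hr1⟩ <;> rcases HyS with h | ⟨m2, hm2, hr2⟩
    · exact hxy h
    · exact hxB.2 (midReach_left hr2)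
    · subst h
      exact hyB.2 (midReach_left hr1)
    · exact hxy (hgood.2 x y m1 m2 hxB hyB (midReach_right hr1) (midReach_right hr2)
        hm1 hm2 (midReach_trans (midReach_symm hr1) hr2))
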